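/- As formal power series in variables x̄ and y over ℚ[v], the identity ∑_{i≥1, j≥1} (∑_{r≥0} (i+j-2-r)!/((i-1-r)!(j-1-r)!r!) · v^r) · x̄^i y^j = x̄ y / (1 - x̄ - v·x̄·y - y) holds, where the inner sum ranges over r with 0 ≤ r ≤ min(i,j)-1. -/

import Mathlib

open Finset

open Polynomial
lemma key (p q r s : ℕ) (h : p + q + r = s + 1) :
    (((s+1).factorial : ℚ))/(p.factorial * q.factorial * r.factorial) =
    (if 1 ≤ p then ((s.factorial : ℚ))/((p-1).factorial * q.factorial * r.factorial) else 0)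
    + (if 1 ≤ q then ((s.factorial : ℚ))/(p.factorial * (q-1).factorial * r.factorial) else 0)
    + (if 1 ≤ r then ((s.factorial : ℚ))/(p.factorial * q.factorial * (r-1).factorial) else 0) := by
  have hf : ∀ n : ℕ, ((n.factorial : ℚ)) ≠ 0 := fun n => by positivity
  rcases p with _ | p <;> rcases q with _ | q <;> rcases r with _ | r <;>
    simp only [Nat.succ_sub_one, Nat.factorial_zero] <;> norm_num
  · omega
  · obtain rfl : s = r := by omega
    rw [Nat.factorial_succ]; push_cast; field_simp
  · obtain rfl : s = q := by omega
    rw [Nat.factorial_succ]; push_cast; field_simp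
  · obtain rfl : s = q + r + 1 := by omega
    simp only [Nat.factorial_succ]; push_cast; field_simp; ring
  · obtain rfl : s = p := by omega
    rw [Nat.factorial_succ]; push_cast; field_simp
  · obtain rfl : s = p + r + 1 := by omega
    simp only [Nat.factorial_succ]; push_cast; field_simp; ring
  · obtain rfl : s = p + q + 1 := by omega
    simp only [Nat.factorial_succ]; push_cast; field_simp; ring
  · obtain rfl : s = p + q + r + 2 := by omega
    simp only [Nat.factorial_succ]; push_cast; field_simp; ring

noncomputable def cf (i j : ℕ) : Polynomial ℚ :=
  if 1 ≤ i ∧ 1 ≤ j then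
    ∑ r ∈ Finset.range (min i j),
      Polynomial.C (((i + j - 2 - r).factorial : ℚ) /
        (((i - 1 - r).factorial : ℚ) * ((j - 1 - r).factorial : ℚ) * (r.factorial : ℚ)))
        * Polynomial.X ^ r
  else 0

lemma coeff_cf (i j n : ℕ) :
    (cf i j).coeff n =
      if 1 ≤ i ∧ 1 ≤ j ∧ n < min i j then
        ((i + j - 2 - n).factorial : ℚ) /
          (((i - 1 - n).factorial : ℚ) * ((j - 1 - n).factorial : ℚ) * (n.factorial : ℚ))
      else 0 := by
  rw [cf]
  split_ifs with h1 h2 h3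
  · rw [Polynomial.finset_sum_coeff]
    simp only [Polynomial.coeff_C_mul, Polynomial.coeff_X_pow, mul_ite, mul_one, mul_zero]
    rw [Finset.sum_ite_eq (Finset.range (min i j))]
    rw [if_pos (Finset.mem_range.mpr h2.2.2)]
  · rw [Polynomial.finset_sum_coeff]
    simp only [Polynomial.coeff_C_mul, Polynomial.coeff_X_pow, mul_ite, mul_one, mul_zero]
    rw [Finset.sum_ite_eq (Finset.range (min i j))]
    rw [if_neg (fun hc => h2 ⟨h1.1, h1.2, Finset.mem_range.mp hc⟩)]
  · exact absurd ⟨h3.1, h3.2.1⟩ h1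
  · simp

lemma cf_rec (i j : ℕ) :
    cf i j = cf (i-1) j + Polynomial.X * cf (i-1) (j-1) + cf i (j-1)
      + (if i = 1 ∧ j = 1 then 1 else 0) := by
  ext n
  have hXmul : (Polynomial.X * cf (i-1) (j-1)).coeff n
      = if 1 ≤ n then (cf (i-1) (j-1)).coeff (n-1) else 0 := by
    rcases n with _ | n
    · simp [Polynomial.mul_coeff_zero]
    · rw [Polynomial.coeff_X_mul, if_pos (by omega)]
      norm_num
  simp only [Polynomial.coeff_add, hXmul, coeff_cf, Polynomial.coeff_one,
    apply_ite (fun p : Polynomial ℚ => p.coeff n), Polynomial.coeff_zero]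
  by_cases hA : 1 ≤ i ∧ 1 ≤ j ∧ n < min i j
  · obtain ⟨hi, hj, hn⟩ := hA
    rw [if_pos ⟨hi, hj, hn⟩]
    by_cases h11 : i = 1 ∧ j = 1
    · obtain ⟨rfl, rfl⟩ := h11
      have hn0 : n = 0 := by omega
      subst hn0
      norm_num
    · have hk := key (i-1-n) (j-1-n) n (i+j-3-n) (by omega)
      have e0 : i + j - 2 - n = (i + j - 3 - n) + 1 := by omega
      have Ea : (if 1 ≤ i-1 ∧ 1 ≤ j ∧ n < min (i-1) j then
            ((i - 1 + j - 2 - n).factorial : ℚ) /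
              (((i - 1 - 1 - n).factorial : ℚ) * ((j - 1 - n).factorial : ℚ) * (n.factorial : ℚ))
          else 0)
          = (if 1 ≤ i-1-n then (((i+j-3-n).factorial : ℚ))/((i-1-n-1).factorial * (j-1-n).factorial * n.factorial) else 0) := by
        by_cases h1 : 1 ≤ i - 1 - n
        · rw [if_pos (by omega), if_pos h1,
            show i - 1 + j - 2 - n = i+j-3-n from by omega,
            show i - 1 - 1 - n = i-1-n-1 from by omega]
        · rw [if_neg (by omega), if_neg h1]
      have Ec : (if 1 ≤ i ∧ 1 ≤ j-1 ∧ n < min i (j-1) then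
            ((i + (j - 1) - 2 - n).factorial : ℚ) /
              (((i - 1 - n).factorial : ℚ) * ((j - 1 - 1 - n).factorial : ℚ) * (n.factorial : ℚ))
          else 0)
          = (if 1 ≤ j-1-n then (((i+j-3-n).factorial : ℚ))/((i-1-n).factorial * (j-1-n-1).factorial * n.factorial) else 0) := by
        by_cases h2 : 1 ≤ j - 1 - n
        · rw [if_pos (by omega), if_pos h2,
            show i + (j-1) - 2 - n = i+j-3-n from by omega,
            show j - 1 - 1 - n = j-1-n-1 from by omega]
        · rw [if_neg (by omega), if_neg h2]
      have Eb : (if 1 ≤ n then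
            (if 1 ≤ i-1 ∧ 1 ≤ j-1 ∧ n-1 < min (i-1) (j-1) then
              ((i - 1 + (j - 1) - 2 - (n-1)).factorial : ℚ) /
                (((i - 1 - 1 - (n-1)).factorial : ℚ) * ((j - 1 - 1 - (n-1)).factorial : ℚ) * ((n-1).factorial : ℚ))
            else 0) else 0)
          = (if 1 ≤ n then (((i+j-3-n).factorial : ℚ))/((i-1-n).factorial * (j-1-n).factorial * (n-1).factorial) else 0) := by
        by_cases h3 : 1 ≤ n
        · rw [if_pos h3, if_pos h3, if_pos (by omega),
            show i - 1 + (j-1) - 2 - (n-1) = i+j-3-n from by omega,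
            show i - 1 - 1 - (n-1) = i-1-n from by omega,
            show j - 1 - 1 - (n-1) = j-1-n from by omega]
        · rw [if_neg h3, if_neg h3]
      rw [Ea, Eb, Ec, if_neg h11, e0, hk]
      ring
  · rw [if_neg hA, if_neg (by omega : ¬(1 ≤ i-1 ∧ 1 ≤ j ∧ n < min (i-1) j)),
      if_neg (by omega : ¬(1 ≤ i ∧ 1 ≤ j-1 ∧ n < min i (j-1)))]
    have hmid : ¬(1 ≤ n) ∨ ¬(1 ≤ i-1 ∧ 1 ≤ j-1 ∧ n-1 < i-1 ∧ n-1 < j-1) := by omega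
    have h11 : ¬(i = 1 ∧ j = 1) ∨ ¬(n = 0) := by omega
    rcases hmid with hm | hm <;> rcases h11 with h1 | h1 <;>
      simp [hm, h1]


lemma cf_zero_left (j : ℕ) : cf 0 j = 0 := by simp [cf]
lemma cf_zero_right (i : ℕ) : cf i 0 = 0 := by simp [cf]

lemma cf_main (i j : ℕ) :
    cf i j - (if 1 ≤ i then cf (i-1) j else 0)
      - (if 1 ≤ i ∧ 1 ≤ j then cf (i-1) (j-1) * Polynomial.X else 0)
      - (if 1 ≤ j then cf i (j-1) else 0)
      = if i = 1 ∧ j = 1 then 1 else 0 := by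
  have hrec := cf_rec i j
  rcases Nat.eq_zero_or_pos i with hi | hi
  · subst hi
    simp [cf_zero_left]
  · rcases Nat.eq_zero_or_pos j with hj | hj
    · subst hj
      simp [cf_zero_right, hi, Nat.not_succ_le_zero]
    · have hi' : 1 ≤ i := hi
      have hj' : 1 ≤ j := hj
      rw [if_pos hi', if_pos hj', if_pos ⟨hi', hj'⟩]
      linear_combination hrec


/-- As formal power series in `x̄ = X 0` and `y = X 1` over `ℚ[v]`, one has
`∑_{i,j ≥ 1} (∑_{0 ≤ r ≤ min i j - 1} (i+j-2-r)!/((i-1-r)!(j-1-r)!r!) vʳ) x̄ⁱ yʲ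
  = x̄ y / (1 - x̄ - v x̄ y - y)`,
where the right-hand side is `x̄ y` times the formal inverse of `1 - x̄ - v x̄ y - y`. -/
theorem stmt_3 :
    (fun d : Fin 2 →₀ ℕ =>
        if 1 ≤ d 0 ∧ 1 ≤ d 1 then
          ∑ r ∈ Finset.range (min (d 0) (d 1)),
            Polynomial.C ((((d 0) + (d 1) - 2 - r).factorial : ℚ) /
              ((((d 0) - 1 - r).factorial : ℚ) * (((d 1) - 1 - r).factorial : ℚ) *
                (r.factorial : ℚ))) * Polynomial.X ^ r
        else 0 : MvPowerSeries (Fin 2) (Polynomial ℚ)) =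
      MvPowerSeries.X 0 * MvPowerSeries.X 1 *
        MvPowerSeries.invOfUnit
          (1 - MvPowerSeries.X 0 - MvPowerSeries.C (σ := Fin 2) (R := Polynomial ℚ) Polynomial.X *
            MvPowerSeries.X 0 * MvPowerSeries.X 1 - MvPowerSeries.X 1) 1 := by
  classical
  set F : MvPowerSeries (Fin 2) (Polynomial ℚ) := fun d => cf (d 0) (d 1) with hF
  have hFeq : (fun d : Fin 2 →₀ ℕ =>
        if 1 ≤ d 0 ∧ 1 ≤ d 1 then
          ∑ r ∈ Finset.range (min (d 0) (d 1)),
            Polynomial.C ((((d 0) + (d 1) - 2 - r).factorial : ℚ) /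
              ((((d 0) - 1 - r).factorial : ℚ) * (((d 1) - 1 - r).factorial : ℚ) *
                (r.factorial : ℚ))) * Polynomial.X ^ r
        else 0 : MvPowerSeries (Fin 2) (Polynomial ℚ)) = F := by
    funext d; simp only [hF, cf]
  rw [hFeq]
  set A : MvPowerSeries (Fin 2) (Polynomial ℚ) :=
    1 - MvPowerSeries.X 0 - MvPowerSeries.C (σ := Fin 2) (R := Polynomial ℚ) Polynomial.X *
      MvPowerSeries.X 0 * MvPowerSeries.X 1 - MvPowerSeries.X 1 with hA
  have hconst : MvPowerSeries.constantCoeff A = 1 := by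
    simp [hA]
  set e0 : Fin 2 →₀ ℕ := Finsupp.single 0 1 with he0
  set e1 : Fin 2 →₀ ℕ := Finsupp.single 1 1 with he1
  have hCX : MvPowerSeries.C (σ := Fin 2) (R := Polynomial ℚ) Polynomial.X *
      MvPowerSeries.X 0 * MvPowerSeries.X 1
      = MvPowerSeries.monomial (R := Polynomial ℚ) (e0 + e1) Polynomial.X := by
    rw [MvPowerSeries.X_def, MvPowerSeries.X_def]
    show MvPowerSeries.monomial (R := Polynomial ℚ) 0 Polynomial.X * _ * _ = _
    rw [MvPowerSeries.monomial_mul_monomial, MvPowerSeries.monomial_mul_monomial]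
    simp [he0, he1]
  have hX01 : MvPowerSeries.X (R := Polynomial ℚ) (0 : Fin 2) * MvPowerSeries.X 1
      = MvPowerSeries.monomial (R := Polynomial ℚ) (e0 + e1) 1 := by
    rw [MvPowerSeries.X_def, MvPowerSeries.X_def, MvPowerSeries.monomial_mul_monomial, one_mul]
  have hmain : F * A = MvPowerSeries.X 0 * MvPowerSeries.X 1 := by
    refine MvPowerSeries.ext fun m => ?_
    rw [hA, hCX, hX01]
    rw [mul_sub, mul_sub, mul_sub, mul_one, map_sub, map_sub, map_sub]
    rw [MvPowerSeries.X_def 0, MvPowerSeries.X_def 1, ← he0, ← he1]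
    rw [MvPowerSeries.coeff_mul_monomial, MvPowerSeries.coeff_mul_monomial,
      MvPowerSeries.coeff_mul_monomial, MvPowerSeries.coeff_monomial]
    have hs0 : ∀ k : Fin 2 →₀ ℕ, MvPowerSeries.coeff k F = cf (k 0) (k 1) := by
      intro k; rfl
    have hm0 : (m - e0) 0 = m 0 - 1 := by simp [he0, Finsupp.tsub_apply]
    have hm1 : (m - e0) 1 = m 1 := by simp [he0, Finsupp.tsub_apply]
    have hm2 : (m - e1) 0 = m 0 := by simp [he1, Finsupp.tsub_apply]
    have hm3 : (m - e1) 1 = m 1 - 1 := by simp [he1, Finsupp.tsub_apply]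
    have hm4 : (m - (e0 + e1)) 0 = m 0 - 1 := by
      simp [he0, he1, Finsupp.tsub_apply, Finsupp.add_apply]
    have hm5 : (m - (e0 + e1)) 1 = m 1 - 1 := by
      simp [he0, he1, Finsupp.tsub_apply, Finsupp.add_apply]
    have hE0 : (e0 + e1) 0 = 1 := by simp [he0, he1]
    have hE1 : (e0 + e1) 1 = 1 := by simp [he0, he1]
    have hle0 : (e0 ≤ m) ↔ 1 ≤ m 0 := by rw [he0, Finsupp.single_le_iff]
    have hle1 : (e1 ≤ m) ↔ 1 ≤ m 1 := by rw [he1, Finsupp.single_le_iff]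
    have hleE : (e0 + e1 ≤ m) ↔ 1 ≤ m 0 ∧ 1 ≤ m 1 := by
      rw [Finsupp.le_def, Fin.forall_fin_two, hE0, hE1]
    have hmeq : (m = e0 + e1) ↔ (m 0 = 1 ∧ m 1 = 1) := by
      rw [Finsupp.ext_iff, Fin.forall_fin_two, hE0, hE1]
    rw [hs0, hs0 (m - e0), hs0 (m - e1), hs0 (m - (e0 + e1))]
    rw [hm0, hm1, hm2, hm3, hm4, hm5]
    simp only [hle0, hle1, hleE, hmeq, mul_one]
    exact cf_main (m 0) (m 1)
  have hinv := MvPowerSeries.mul_invOfUnit A 1 (by simp [hconst])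
  calc F = F * 1 := by ring
    _ = F * (A * MvPowerSeries.invOfUnit A 1) := by rw [hinv]
    _ = (F * A) * MvPowerSeries.invOfUnit A 1 := by ring
    _ = MvPowerSeries.X 0 * MvPowerSeries.X 1 * MvPowerSeries.invOfUnit A 1 := by rw [hmain]
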